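/- Pumping lemma for separated tropical automata: assume ⟦A_max⟧ ≤ ⟦A_min⟧. Let P = Prod(c) for some context c, R = Reach(u) for some term u, and let m be a context. Then there exists a real number x such that every run of A_max over m from p to p with p ∈ P ∩ R has weight at most x, and every run of A_min over m from q to q with q ∈ P ∩ R has weight at least x. -/

import Mathlib

/-- A ranked alphabet: symbols with arities. -/
structure RankedAlphabet where
  symb : Type
  ar : symb → ℕ

/-- Terms (finite ranked trees) over a ranked alphabet. -/
inductive Term (A : RankedAlphabet) : Type where
  | node (a : A.symb) (ts : Fin (A.ar a) → Term A) : Term A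

/-- Height of a term: length of the longest branch. -/
def Term.height {A : RankedAlphabet} : Term A → ℕ
  | .node _ ts => Finset.univ.sup fun i => (ts i).height + 1

/-- Size of a term: number of nodes. -/
def Term.size {A : RankedAlphabet} : Term A → ℕ
  | .node _ ts => 1 + ∑ i, (ts i).size

/-- A nondeterministic tree automaton with real weights on transitions and final states. -/
structure WTA (A : RankedAlphabet) (Q : Type) where
  trans : (a : A.symb) → (Fin (A.ar a) → Q) → Q → Prop
  wt : (a : A.symb) → (Fin (A.ar a) → Q) → Q → ℝ
  final : Q → Prop
  fwt : Q → ℝ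

/-- Runs of an automaton over a term, reaching a given state at the root. -/
inductive RunOf {A : RankedAlphabet} {Q : Type} (M : WTA A Q) : Term A → Q → Type where
  | node (a : A.symb) (ts : Fin (A.ar a) → Term A) (qs : Fin (A.ar a) → Q) (q : Q)
      (hq : M.trans a qs q) (rs : ∀ i, RunOf M (ts i) (qs i)) : RunOf M (.node a ts) q

/-- The weight of a run: sum of the weights of the transitions used. -/
def RunOf.wt {A : RankedAlphabet} {Q : Type} {M : WTA A Q} :
    {t : Term A} → {q : Q} → RunOf M t q → ℝ
  | _, _, .node a _ qs q _ rs => (∑ i, (rs i).wt) + M.wt a qs q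

/-- Contexts: terms with exactly one hole. -/
inductive Ctx (A : RankedAlphabet) : Type where
  | hole : Ctx A
  | node (a : A.symb) (i : Fin (A.ar a)) (c : Ctx A) (ts : Fin (A.ar a) → Term A) : Ctx A

/-- Plugging a term into the hole of a context. -/
def Ctx.plug {A : RankedAlphabet} : Ctx A → Term A → Term A
  | .hole, t => t
  | .node a i c ts, t => .node a (Function.update ts i (c.plug t))

/-- Composition of contexts: plugging the second context into the hole of the first. -/
def Ctx.comp {A : RankedAlphabet} : Ctx A → Ctx A → Ctx A
  | .hole, d => d
  | .node a i c ts, d => .node a i (c.comp d) ts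

/-- Iterated composition of a context with itself. -/
def Ctx.pow {A : RankedAlphabet} (m : Ctx A) : ℕ → Ctx A
  | 0 => .hole
  | n + 1 => m.comp (m.pow n)

/-- Runs over a context, from a state (at the hole) to a state (at the root). -/
inductive CRun {A : RankedAlphabet} {Q : Type} (M : WTA A Q) : Ctx A → Q → Q → Type where
  | hole (p : Q) : CRun M .hole p p
  | node (a : A.symb) (i : Fin (A.ar a)) (c : Ctx A) (ts : Fin (A.ar a) → Term A)
      (qs : Fin (A.ar a) → Q) (p q : Q)
      (hq : M.trans a qs q)
      (hc : CRun M c p (qs i))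
      (rs : ∀ j, j ≠ i → RunOf M (ts j) (qs j)) : CRun M (.node a i c ts) p q

/-- The weight of a run over a context. -/
def CRun.wt {A : RankedAlphabet} {Q : Type} {M : WTA A Q} :
    {c : Ctx A} → {p q : Q} → CRun M c p q → ℝ
  | _, _, _, .hole _ => 0
  | _, _, _, .node a i _ _ qs _ q _ hc rs =>
      (∑ j : {j // j ≠ i}, (rs j.1 j.2).wt) + M.wt a qs q + hc.wt

/-- Gluing a run over a context with a run over a term yields a run over the plugged term. -/
def CRun.glue {A : RankedAlphabet} {Q : Type} {M : WTA A Q} {t : Term A} :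
    {c : Ctx A} → {p q : Q} → CRun M c p q → RunOf M t p → RunOf M (c.plug t) q
  | _, _, _, .hole _, r => r
  | _, _, _, .node a i c ts qs _ q hq hc rs, r =>
      .node a (Function.update ts i (c.plug t)) qs q hq
        (fun j =>
          if h : j = i then
            cast (by subst h; rw [Function.update_self]) (CRun.glue hc r)
          else
            cast (congrArg (fun s => RunOf M s (qs j))
              (Function.update_of_ne h (c.plug t) ts).symm) (rs j h))

/-- Gluing runs over composed contexts. -/
def CRun.cglue {A : RankedAlphabet} {Q : Type} {M : WTA A Q} {d : Ctx A} {p : Q} :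
    {c : Ctx A} → {q r : Q} → CRun M c q r → CRun M d p q → CRun M (c.comp d) p r
  | _, _, _, .hole _, rd => rd
  | _, _, _, .node a i c ts qs _ r hq hc rs, rd =>
      .node a i (c.comp d) ts qs p r hq (hc.cglue rd) rs

/-- The `n`-fold iteration of a loop run over a context. -/
def CRun.pow {A : RankedAlphabet} {Q : Type} {M : WTA A Q} {m : Ctx A} {q : Q}
    (σ : CRun M m q q) : (n : ℕ) → CRun M (m.pow n) q q
  | 0 => .hole q
  | n + 1 => σ.cglue (σ.pow n)

/-- `x` is the weight of some accepting run of `M` over `t`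
(weight of the run plus the final-state weight). -/
def AccWeight {A : RankedAlphabet} {Q : Type} (M : WTA A Q) (t : Term A) (x : ℝ) : Prop :=
  ∃ (q : Q) (r : RunOf M t q), M.final q ∧ r.wt + M.fwt q = x

/-- `M` has some accepting run over `t`. -/
def HasAcc {A : RankedAlphabet} {Q : Type} (M : WTA A Q) (t : Term A) : Prop :=
  ∃ x, AccWeight M t x

/-- `f` is the max-plus semantics of `M`: `f t = ⊥` iff there is no accepting run,
and otherwise `f t` is the maximum weight of an accepting run. -/
def ComputesMax {A : RankedAlphabet} {Q : Type} (M : WTA A Q) (f : Term A → Option ℝ) : Prop :=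
  ∀ t, (f t = none ↔ ¬ HasAcc M t) ∧
    ∀ x, f t = some x → AccWeight M t x ∧ ∀ y, AccWeight M t y → y ≤ x

/-- `f` is the min-plus semantics of `M`. -/
def ComputesMin {A : RankedAlphabet} {Q : Type} (M : WTA A Q) (f : Term A → Option ℝ) : Prop :=
  ∀ t, (f t = none ↔ ¬ HasAcc M t) ∧
    ∀ x, f t = some x → AccWeight M t x ∧ ∀ y, AccWeight M t y → x ≤ y

/-- An automaton is unambiguous if every term has at most one accepting run. -/
def Unambiguous {A : RankedAlphabet} {Q : Type} (M : WTA A Q) : Prop :=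
  ∀ (t : Term A) (q q' : Q) (r : RunOf M t q) (r' : RunOf M t q'),
    M.final q → M.final q' → q = q' ∧ HEq r r'

/-- The order on `ℝ ∪ {⊥}` in which `⊥` is comparable only with itself. -/
def OLe : Option ℝ → Option ℝ → Prop
  | none, none => True
  | some x, some y => x ≤ y
  | _, _ => False

/-- Shifting a value of `ℝ ∪ {⊥}` by a real number. -/
def oshift (u : Option ℝ) (x : ℝ) : Option ℝ := u.map (· + x)

/-- The set of states reachable at the root by some run over `t`. -/
def reachSet {A : RankedAlphabet} {Q : Type} (M : WTA A Q) (t : Term A) : Set Q :=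
  {q | Nonempty (RunOf M t q)}

/-- The set of states at the hole from which there is an accepting run over the context `c`. -/
def prodSet {A : RankedAlphabet} {Q : Type} (M : WTA A Q) (c : Ctx A) : Set Q :=
  {p | ∃ q, M.final q ∧ Nonempty (CRun M c p q)}

section Bi
variable {A : RankedAlphabet} {Q1 Q2 : Type} (M1 : WTA A Q1) (M2 : WTA A Q2)

/-- Reachable states of the disjoint union of the two automata. -/
def biReach (t : Term A) : Set (Q1 ⊕ Q2) :=
  Sum.inl '' reachSet M1 t ∪ Sum.inr '' reachSet M2 t

/-- Productive states of the disjoint union of the two automata. -/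
def biProd (c : Ctx A) : Set (Q1 ⊕ Q2) :=
  Sum.inl '' prodSet M1 c ∪ Sum.inr '' prodSet M2 c

/-- Final states of the disjoint union of the two automata. -/
def biFinal : Set (Q1 ⊕ Q2) :=
  Sum.inl '' {q | M1.final q} ∪ Sum.inr '' {q | M2.final q}

/-- Transition relation of the disjoint union of the two automata. -/
def biTrans (a : A.symb) (qs : Fin (A.ar a) → Q1 ⊕ Q2) (q : Q1 ⊕ Q2) : Prop :=
  (∃ (qs' : Fin (A.ar a) → Q1) (q' : Q1),
      qs = Sum.inl ∘ qs' ∧ q = Sum.inl q' ∧ M1.trans a qs' q') ∨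
  (∃ (qs' : Fin (A.ar a) → Q2) (q' : Q2),
      qs = Sum.inr ∘ qs' ∧ q = Sum.inr q' ∧ M2.trans a qs' q')

/-- The family `Reachable` of sets of states of the form `Reach(t)`. -/
def ReachableSets : Set (Set (Q1 ⊕ Q2)) := {S | ∃ t, biReach M1 M2 t = S}

/-- The family `Productive` of sets of states of the form `Prod(c)`. -/
def ProductiveSets : Set (Set (Q1 ⊕ Q2)) := {S | ∃ c, biProd M1 M2 c = S}

/-- `t` refines `s` for `P` with shift `x`. -/
def Refines (P : Set (Q1 ⊕ Q2)) (t s : Term A) (x : ℝ) : Prop :=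
  biReach M1 M2 s = biReach M1 M2 t ∧
  (∀ p : Q1, Sum.inl p ∈ P → ∀ ρ : RunOf M1 s p, ∃ ρ' : RunOf M1 t p, ρ.wt ≤ ρ'.wt + x) ∧
  (∀ q : Q2, Sum.inr q ∈ P → ∀ τ : RunOf M2 s q, ∃ τ' : RunOf M2 t q, τ'.wt + x ≤ τ.wt)

end Bi

/-- Transitions of the product automaton `A_pro`, relative to a transition relation `Δ`. -/
def ProTrans {A : RankedAlphabet} {Q : Type}
    (Δ : ∀ a : A.symb, (Fin (A.ar a) → Q) → Q → Prop) (a : A.symb)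
    (RPs : Fin (A.ar a) → Set Q × Set Q) (RP : Set Q × Set Q) : Prop :=
  RP.1 = {r | ∃ rs, Δ a rs r ∧ ∀ j, rs j ∈ (RPs j).1} ∧
  ∀ i, (RPs i).2 =
    {ri | ∃ rs p, Δ a rs p ∧ rs i = ri ∧ (∀ j, j ≠ i → rs j ∈ (RPs j).1) ∧ p ∈ RP.2}

section AuxLemmas

variable {A : RankedAlphabet} {Q : Type} {M : WTA A Q}

lemma Ctx.comp_plug (c d : Ctx A) (t : Term A) :
    (c.comp d).plug t = c.plug (d.plug t) := by
  induction c with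
  | hole => rfl
  | node a i c ts ih => simp [Ctx.comp, Ctx.plug, ih]

lemma Ctx.comp_assoc (c d e : Ctx A) :
    (c.comp d).comp e = c.comp (d.comp e) := by
  induction c with
  | hole => rfl
  | node a i c ts ih => simp [Ctx.comp, ih]

lemma Ctx.pow_add (m : Ctx A) (a b : ℕ) :
    m.pow (a + b) = (m.pow a).comp (m.pow b) := by
  induction a with
  | zero => rw [Nat.zero_add]; rfl
  | succ a ih =>
    rw [Nat.succ_add]
    show m.comp (m.pow (a + b)) = (m.comp (m.pow a)).comp (m.pow b)
    rw [ih, Ctx.comp_assoc]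

lemma Ctx.pow_mul (m : Ctx A) (d k : ℕ) :
    (m.pow d).pow k = m.pow (d * k) := by
  induction k with
  | zero => rw [Nat.mul_zero]; rfl
  | succ k ih =>
    show (m.pow d).comp ((m.pow d).pow k) = _
    rw [ih, ← Ctx.pow_add]
    congr 1
    ring

lemma RunOf.wt_cast {t t' : Term A} {q : Q} (h : t = t')
    (e : RunOf M t q = RunOf M t' q) (r : RunOf M t q) :
    (cast e r).wt = r.wt := by
  subst h
  rw [eq_of_heq (cast_heq e r)]

lemma CRun.glue_wt {t : Term A} :
    ∀ {c : Ctx A} {p q : Q} (σ : CRun M c p q) (r : RunOf M t p),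
      (σ.glue r).wt = σ.wt + r.wt := by
  intro c p q σ
  induction σ with
  | hole p => intro r; simp [CRun.glue, CRun.wt, RunOf.wt]; rfl
  | node a i c ts qs p q hq hc rs ih =>
    intro r
    simp only [CRun.glue, RunOf.wt, CRun.wt]
    rw [Fintype.sum_eq_add_sum_compl i]
    rw [dif_pos rfl]
    rw [RunOf.wt_cast (Function.update_self i (c.plug t) ts).symm]
    rw [ih r]
    have h2 : ∑ j ∈ ({i}ᶜ : Finset (Fin (A.ar a))),
        (if h : j = i then
            cast (by subst h; rw [Function.update_self]) (CRun.glue hc r)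
          else
            cast (congrArg (fun s => RunOf M s (qs j))
              (Function.update_of_ne h (c.plug t) ts).symm) (rs j h)).wt
        = ∑ j : {j // j ≠ i}, (rs j.1 j.2).wt := by
      rw [Finset.sum_subtype (p := fun j => j ≠ i) ({i}ᶜ : Finset (Fin (A.ar a)))
        (fun x => by simp)]
      apply Finset.sum_congr rfl
      intro j _
      rw [dif_neg j.2, RunOf.wt_cast (Function.update_of_ne j.2 (c.plug t) ts).symm]
    rw [h2]
    ring

end AuxLemmas

section AuxLemmas2

variable {A : RankedAlphabet} {Q : Type} {M : WTA A Q}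

lemma CRun.cglue_wt {d : Ctx A} {p : Q} :
    ∀ {c : Ctx A} {q r : Q} (σ : CRun M c q r) (ρ : CRun M d p q),
      (σ.cglue ρ).wt = σ.wt + ρ.wt := by
  intro c q r σ
  induction σ with
  | hole p => intro ρ; simp [CRun.cglue, CRun.wt]; rfl
  | node a i c ts qs p' q' hq hc rs ih =>
    intro ρ
    show (∑ j : {j // j ≠ i}, (rs j.1 j.2).wt) + M.wt a qs q' + (hc.cglue ρ).wt = _
    rw [ih ρ]
    show _ = (∑ j : {j // j ≠ i}, (rs j.1 j.2).wt) + M.wt a qs q' + hc.wt + ρ.wt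
    ring

lemma CRun.pow_wt {m : Ctx A} {p : Q} (σ : CRun M m p p) (n : ℕ) :
    (σ.pow n).wt = n * σ.wt := by
  induction n with
  | zero => simp [CRun.pow, CRun.wt]
  | succ n ih =>
    show (σ.cglue (σ.pow n)).wt = _
    rw [CRun.cglue_wt, ih]
    push_cast
    ring

/-- Decomposition of a run over a plugged term. -/
lemma run_decomp {t : Term A} :
    ∀ (c : Ctx A) {q : Q}, RunOf M (c.plug t) q →
      ∃ p : Q, Nonempty (CRun M c p q) ∧ Nonempty (RunOf M t p) := by
  intro c
  induction c with
  | hole => intro q r; exact ⟨q, ⟨.hole q⟩, ⟨r⟩⟩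
  | node a i c ts ih =>
    intro q r
    cases r with
    | node _ _ qs _ hq rs =>
      have hri := rs i
      rw [Function.update_self] at hri
      obtain ⟨p, ⟨κ⟩, hr⟩ := ih hri
      refine ⟨p, ⟨.node a i c ts qs p q hq κ (fun j hj => ?_)⟩, hr⟩
      have := rs j
      rwa [Function.update_of_ne hj] at this

/-- Chain decomposition of a run over an iterated context. -/
lemma run_pow_decomp {u : Term A} {m : Ctx A} :
    ∀ (n : ℕ) (q : Q), RunOf M ((m.pow n).plug u) q →
      ∃ ps : ℕ → Q, ps n = q ∧ Nonempty (RunOf M u (ps 0)) ∧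
        ∀ i < n, Nonempty (CRun M m (ps i) (ps (i + 1))) := by
  intro n
  induction n with
  | zero => intro q r; exact ⟨fun _ => q, rfl, ⟨r⟩, fun i hi => absurd hi (Nat.not_lt_zero i)⟩
  | succ n ih =>
    intro q r
    rw [show m.pow (n + 1) = m.comp (m.pow n) from rfl, Ctx.comp_plug] at r
    obtain ⟨p, ⟨κ⟩, ⟨r'⟩⟩ := run_decomp m r
    obtain ⟨ps, hn, hu, hch⟩ := ih p r'
    refine ⟨fun j => if j = n + 1 then q else ps j, by simp, by simpa using hu, ?_⟩
    intro i hi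
    rcases Nat.lt_succ_iff_lt_or_eq.1 hi with hi' | hi'
    · have h1 : i ≠ n + 1 := by omega
      have h2 : i ≠ n := by omega
      simpa [h1, h2] using hch i hi'
    · subst hi'
      have h1 : i ≠ i + 1 := by omega
      simpa [h1, hn] using ⟨κ⟩

/-- Composition of a chain of runs over `m` into a run over a power of `m`. -/
lemma chain_comp {m : Ctx A} {n : ℕ} (ps : ℕ → Q)
    (h : ∀ i < n, Nonempty (CRun M m (ps i) (ps (i + 1)))) :
    ∀ (k i : ℕ), i + k ≤ n → Nonempty (CRun M (m.pow k) (ps i) (ps (i + k))) := by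
  intro k
  induction k with
  | zero => intro i _; exact ⟨.hole (ps i)⟩
  | succ k ih =>
    intro i hik
    obtain ⟨σ⟩ := h (i + k) (by omega)
    obtain ⟨ρ⟩ := ih i (by omega)
    exact ⟨σ.cglue ρ⟩

/-- The pumped runs. -/
lemma pump {c m : Ctx A} {u : Term A} {pa pm p0 qf : Q} (hfin : M.final qf)
    (κ : CRun M c pa qf) {a d b : ℕ} (α : CRun M (m.pow a) pm pa)
    (lam : CRun M (m.pow d) pm pm) (β : CRun M (m.pow b) p0 pm)
    (ru : RunOf M u p0) (k : ℕ) :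
    AccWeight M (c.plug ((m.pow (a + b + d * k)).plug u))
      ((κ.wt + α.wt + β.wt + ru.wt + M.fwt qf) + k * lam.wt) := by
  have hA : AccWeight M ((c.comp ((m.pow a).comp (((m.pow d).pow k).comp (m.pow b)))).plug u)
      ((κ.wt + α.wt + β.wt + ru.wt + M.fwt qf) + k * lam.wt) := by
    refine ⟨qf, (κ.cglue (α.cglue ((lam.pow k).cglue β))).glue ru, hfin, ?_⟩
    rw [CRun.glue_wt, CRun.cglue_wt, CRun.cglue_wt, CRun.cglue_wt, CRun.pow_wt]
    ring
  have hctx : (m.pow a).comp (((m.pow d).pow k).comp (m.pow b)) = m.pow (a + b + d * k) := by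
    rw [Ctx.pow_mul, ← Ctx.pow_add, ← Ctx.pow_add]
    congr 1
    ring
  rwa [hctx, Ctx.comp_plug] at hA

/-- Simple loop pumping. -/
lemma simple_loop {c m : Ctx A} {u : Term A} {p qf : Q} (hfin : M.final qf)
    (κ : CRun M c p qf) (σ : CRun M m p p) (ru : RunOf M u p) (n : ℕ) :
    AccWeight M (c.plug ((m.pow n).plug u))
      ((κ.wt + ru.wt + M.fwt qf) + n * σ.wt) := by
  have hA : AccWeight M ((c.comp (m.pow n)).plug u)
      ((κ.wt + ru.wt + M.fwt qf) + n * σ.wt) := by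
    refine ⟨qf, (κ.cglue (σ.pow n)).glue ru, hfin, ?_⟩
    rw [CRun.glue_wt, CRun.cglue_wt, CRun.pow_wt]
    ring
  rwa [Ctx.comp_plug] at hA

/-- Loop extraction via pigeonhole. -/
lemma extract [Fintype Q] {c m : Ctx A} {u : Term A}
    (h : HasAcc M (c.plug ((m.pow (Fintype.card Q)).plug u))) :
    ∃ (e d : ℕ) (C W : ℝ), 1 ≤ d ∧
      ∀ k : ℕ, AccWeight M (c.plug ((m.pow (e + d * k)).plug u)) (C + k * W) := by
  obtain ⟨x, qf, r, hfin, -⟩ := h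
  obtain ⟨q, ⟨κ⟩, ⟨r2⟩⟩ := run_decomp c r
  obtain ⟨ps, hpsN, ⟨ru⟩, hchain⟩ := run_pow_decomp (Fintype.card Q) q r2
  set N := Fintype.card Q with hN
  -- pigeonhole on ps over {0, ..., N}
  obtain ⟨x1, x2, hne, heq⟩ := Fintype.exists_ne_map_eq_of_card_lt
    (fun i : Fin (N + 1) => ps i.1) (by simp [hN])
  have key : ∃ i j : ℕ, i < j ∧ j ≤ N ∧ ps i = ps j := by
    rcases Ne.lt_or_gt hne with hlt | hlt
    · exact ⟨x1.1, x2.1, hlt, Nat.lt_succ_iff.1 x2.2, heq⟩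
    · exact ⟨x2.1, x1.1, hlt, Nat.lt_succ_iff.1 x1.2, heq.symm⟩
  obtain ⟨i, j, hij, hjN, hpij⟩ := key
  -- pieces
  obtain ⟨β⟩ := chain_comp ps hchain i 0 (by omega)
  obtain ⟨lam'⟩ := chain_comp ps hchain (j - i) i (by omega)
  obtain ⟨α'⟩ := chain_comp ps hchain (N - j) j (by omega)
  rw [Nat.zero_add] at β
  have hji : i + (j - i) = j := by omega
  rw [hji, ← hpij] at lam'
  have hNj : j + (N - j) = N := by omega
  rw [hNj, hpsN, ← hpij] at α'
  refine ⟨(N - j) + i, j - i, κ.wt + α'.wt + β.wt + ru.wt + M.fwt qf, lam'.wt,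
    by omega, fun k => pump hfin κ α' lam' β ru k⟩

end AuxLemmas2


section SemanticsLemmas

variable {A : RankedAlphabet} {Q1 Q2 : Type} {Mmax : WTA A Q1} {Mmin : WTA A Q2}
  {f g : Term A → Option ℝ}

/-- Separation: every max accepting weight is below every min accepting weight. -/
lemma sep_lemma (hf : ComputesMax Mmax f) (hg : ComputesMin Mmin g)
    (hle : ∀ t, OLe (f t) (g t)) {t : Term A} {y z : ℝ}
    (hy : AccWeight Mmax t y) (hz : AccWeight Mmin t z) : y ≤ z := by
  have h := hle t
  cases hft : f t with
  | none => exact absurd ⟨y, hy⟩ ((hf t).1.1 hft)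
  | some a =>
    rw [hft] at h
    cases hgt : g t with
    | none => rw [hgt] at h; exact h.elim
    | some b =>
      rw [hgt] at h
      have h1 : y ≤ a := ((hf t).2 a hft).2 y hy
      have h2 : b ≤ z := ((hg t).2 b hgt).2 z hz
      have h3 : a ≤ b := h
      linarith

lemma acc_iff (hf : ComputesMax Mmax f) (hg : ComputesMin Mmin g)
    (hle : ∀ t, OLe (f t) (g t)) (t : Term A) :
    HasAcc Mmax t ↔ HasAcc Mmin t := by
  have h := hle t
  constructor
  · intro ha
    cases hft : f t with
    | none => exact absurd ha ((hf t).1.1 hft)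
    | some a =>
      rw [hft] at h
      cases hgt : g t with
      | none => rw [hgt] at h; exact h.elim
      | some b => exact ⟨b, ((hg t).2 b hgt).1⟩
  · intro ha
    cases hgt : g t with
    | none => exact absurd ha ((hg t).1.1 hgt)
    | some b =>
      rw [hgt] at h
      cases hft : f t with
      | none => rw [hft] at h; exact h.elim
      | some a => exact ⟨a, ((hf t).2 a hft).1⟩

end SemanticsLemmas

lemma lin_le {C K s w : ℝ} (h : ∀ k : ℕ, C + k * s ≤ K + k * w) : s ≤ w := by
  by_contra hc
  push_neg at hc
  obtain ⟨k, hk⟩ := exists_nat_gt ((K - C) / (s - w))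
  have h1 := h k
  have h2 : (0:ℝ) < s - w := by linarith
  rw [div_lt_iff₀ h2] at hk
  nlinarith

section MemLemmas

variable {A : RankedAlphabet} {Q1 Q2 : Type} (M1 : WTA A Q1) (M2 : WTA A Q2)

lemma memmax {c : Ctx A} {u : Term A} {p : Q1}
    (hp : Sum.inl p ∈ biProd M1 M2 c ∩ biReach M1 M2 u) :
    (∃ qf, M1.final qf ∧ Nonempty (CRun M1 c p qf)) ∧ Nonempty (RunOf M1 u p) := by
  obtain ⟨h1, h2⟩ := hp
  constructor
  · rcases h1 with ⟨p', hp', he⟩ | ⟨q', hq', he⟩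
    · obtain rfl := Sum.inl.inj he; exact hp'
    · exact absurd he (by simp)
  · rcases h2 with ⟨p', hp', he⟩ | ⟨q', hq', he⟩
    · obtain rfl := Sum.inl.inj he; exact hp'
    · exact absurd he (by simp)

lemma memmin {c : Ctx A} {u : Term A} {q : Q2}
    (hq : Sum.inr q ∈ biProd M1 M2 c ∩ biReach M1 M2 u) :
    (∃ qf, M2.final qf ∧ Nonempty (CRun M2 c q qf)) ∧ Nonempty (RunOf M2 u q) := by
  obtain ⟨h1, h2⟩ := hq
  constructor
  · rcases h1 with ⟨p', hp', he⟩ | ⟨q', hq', he⟩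
    · exact absurd he (by simp)
    · obtain rfl := Sum.inr.inj he; exact hq'
  · rcases h2 with ⟨p', hp', he⟩ | ⟨q', hq', he⟩
    · exact absurd he (by simp)
    · obtain rfl := Sum.inr.inj he; exact hq'

end MemLemmas


/-- pumping lemma for separated tropical automata: assuming
`⟦A_max⟧ ≤ ⟦A_min⟧`, for `P = Prod(c)`, `R = Reach(u)` and any context `m`, there is a
real `x` bounding from above the weight of every max-plus loop run on `m` at a state of
`P ∩ R` and from below the weight of every min-plus loop run on `m` at a state of `P ∩ R`. -/
theorem pumping_lemma {A : RankedAlphabet} {Q1 Q2 : Type}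
    [Fintype Q1] [Fintype Q2] (Mmax : WTA A Q1) (Mmin : WTA A Q2)
    (f g : Term A → Option ℝ)
    (hf : ComputesMax Mmax f) (hg : ComputesMin Mmin g)
    (hle : ∀ t, OLe (f t) (g t))
    (c : Ctx A) (u : Term A) (m : Ctx A) :
    ∃ x : ℝ,
      (∀ p : Q1, Sum.inl p ∈ biProd Mmax Mmin c ∩ biReach Mmax Mmin u →
        ∀ ρ : CRun Mmax m p p, ρ.wt ≤ x) ∧
      (∀ q : Q2, Sum.inr q ∈ biProd Mmax Mmin c ∩ biReach Mmax Mmin u →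
        ∀ τ : CRun Mmin m q q, x ≤ τ.wt) := by
  classical
  by_cases Hmax : ∃ p : Q1, (Sum.inl p ∈ biProd Mmax Mmin c ∩ biReach Mmax Mmin u) ∧
      Nonempty (CRun Mmax m p p)
  · obtain ⟨p0, hp0, ⟨ρ0⟩⟩ := Hmax
    obtain ⟨⟨qf0, hqf0, ⟨κ0⟩⟩, ⟨ru0⟩⟩ := memmax Mmax Mmin hp0
    have hacc : HasAcc Mmin (c.plug ((m.pow (Fintype.card Q2)).plug u)) :=
      (acc_iff hf hg hle _).1 ⟨_, simple_loop hqf0 κ0 ρ0 ru0 (Fintype.card Q2)⟩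
    obtain ⟨e, d, C, W, hd, hpump⟩ := extract hacc
    have hd' : (0:ℝ) < d := by exact_mod_cast hd
    set S : Set ℝ := {w | ∃ p : Q1,
      (Sum.inl p ∈ biProd Mmax Mmin c ∩ biReach Mmax Mmin u) ∧
      ∃ ρ : CRun Mmax m p p, ρ.wt = w} with hS
    have hSne : S.Nonempty := ⟨ρ0.wt, p0, hp0, ρ0, rfl⟩
    have hub : ∀ w ∈ S, w ≤ W / d := by
      rintro w ⟨p, hp, ρ, rfl⟩
      obtain ⟨⟨qf, hqf, ⟨κ⟩⟩, ⟨ru⟩⟩ := memmax Mmax Mmin hp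
      have hs : ∀ k : ℕ, (κ.wt + ru.wt + Mmax.fwt qf + e * ρ.wt) + k * (d * ρ.wt)
          ≤ C + k * W := by
        intro k
        have h1 := simple_loop hqf κ ρ ru (e + d * k)
        have h2 := hpump k
        have h3 := sep_lemma hf hg hle h1 h2
        push_cast at h3
        nlinarith [h3]
      have h4 := lin_le hs
      rw [le_div_iff₀ hd']
      linarith
    refine ⟨sSup S, ?_, ?_⟩
    · intro p hp ρ
      exact le_csSup ⟨W / d, hub⟩ ⟨p, hp, ρ, rfl⟩
    · intro q hq τ
      obtain ⟨⟨qg, hqg, ⟨κ'⟩⟩, ⟨ru'⟩⟩ := memmin Mmax Mmin hq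
      apply csSup_le hSne
      rintro w ⟨p, hp, ρ, rfl⟩
      obtain ⟨⟨qf, hqf, ⟨κ⟩⟩, ⟨ru⟩⟩ := memmax Mmax Mmin hp
      exact lin_le (fun k =>
        sep_lemma hf hg hle (simple_loop hqf κ ρ ru k) (simple_loop hqg κ' τ ru' k))
  · by_cases Hmin : ∃ q : Q2, (Sum.inr q ∈ biProd Mmax Mmin c ∩ biReach Mmax Mmin u) ∧
        Nonempty (CRun Mmin m q q)
    · obtain ⟨q0, hq0, ⟨τ0⟩⟩ := Hmin
      obtain ⟨⟨qg0, hqg0, ⟨κ0⟩⟩, ⟨ru0⟩⟩ := memmin Mmax Mmin hq0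
      have hacc : HasAcc Mmax (c.plug ((m.pow (Fintype.card Q1)).plug u)) :=
        (acc_iff hf hg hle _).2 ⟨_, simple_loop hqg0 κ0 τ0 ru0 (Fintype.card Q1)⟩
      obtain ⟨e, d, C, W, hd, hpump⟩ := extract hacc
      have hd' : (0:ℝ) < d := by exact_mod_cast hd
      refine ⟨W / d, ?_, ?_⟩
      · intro p hp ρ
        exact absurd ⟨p, hp, ⟨ρ⟩⟩ Hmax
      · intro q hq τ
        obtain ⟨⟨qg, hqg, ⟨κ⟩⟩, ⟨ru⟩⟩ := memmin Mmax Mmin hq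
        have hs : ∀ k : ℕ, C + k * W
            ≤ (κ.wt + ru.wt + Mmin.fwt qg + e * τ.wt) + k * (d * τ.wt) := by
          intro k
          have h1 := simple_loop hqg κ τ ru (e + d * k)
          have h2 := hpump k
          have h3 := sep_lemma hf hg hle h2 h1
          push_cast at h3
          nlinarith [h3]
        have h4 := lin_le hs
        rw [div_le_iff₀ hd']
        linarith
    · exact ⟨0, fun p hp ρ => absurd ⟨p, hp, ⟨ρ⟩⟩ Hmax,
        fun q hq τ => absurd ⟨q, hq, ⟨τ⟩⟩ Hmin⟩
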